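/- For the coordinate-wise median of q real numbers with at most f Byzantine values and q ≥ 2f+1, the distance from the median to any correct value is at most the diameter of the correct values (the maximum pairwise distance among correct values). -/

import Mathlib

/-- Lower median of a list of reals. -/
noncomputable def listMedian (l : List ℝ) : ℝ :=
  (l.mergeSort (· ≤ ·)).getD ((l.length - 1) / 2) 0

/-- for `q ≥ 2f+1` reals of which at most `f` are Byzantine
(correct index set `H`, `|H| ≥ q - f`), the distance from the median to any
correct value is at most the diameter (max pairwise distance) of correct values. -/
theorem stmt1 (q f : ℕ) (x : Fin q → ℝ) (H : Finset (Fin q))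
    (hq : q ≥ 2 * f + 1) (hH : H.card ≥ q - f) (hne : H.Nonempty)
    (l : Fin q) (hl : l ∈ H) :
    |listMedian (List.ofFn x) - x l| ≤
      (H ×ˢ H).sup' (hne.product hne) (fun p => |x p.1 - x p.2|) := by
  set L := (List.ofFn x).mergeSort (· ≤ ·) with hL
  have hperm : List.Perm L (List.ofFn x) := List.mergeSort_perm _ _
  have hlen : L.length = q := by simp [hL]
  have hsort : L.Pairwise (fun a b : ℝ => a ≤ b) := by
    have := List.pairwise_mergeSort (le := fun a b : ℝ => decide (a ≤ b))
      (by intro a b c; simp; exact le_trans) (by intro a b; simpa using le_total a b)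
      (List.ofFn x)
    simpa using this
  set k := (q - 1) / 2 with hk
  have hkq : k < q := by omega
  have hm : listMedian (List.ofFn x) = L[k]'(by omega) := by
    rw [listMedian, List.getD_eq_getElem?_getD, List.getElem?_eq_getElem (by simpa [hlen] using hkq)]
    simp [hk]
    rfl
  set m := listMedian (List.ofFn x) with hmdef
  -- count values ≤ m and ≥ m in L
  have hcount_le : k + 1 ≤ (L.filter (fun y => decide (y ≤ m))).length := by
    have h1 : (L.take (k+1)).filter (fun y => decide (y ≤ m)) = L.take (k+1) := by
      apply List.filter_eq_self.2
      intro y hy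
      obtain ⟨i, hi, rfl⟩ := List.getElem_of_mem hy
      have hi' : i < k + 1 := lt_of_lt_of_le hi (by simp [List.length_take])
      rw [List.getElem_take]
      simp only [decide_eq_true_eq, hm]
      rcases eq_or_lt_of_le (Nat.lt_succ_iff.1 hi') with h | h
      · subst h; exact le_refl _
      · exact List.Pairwise.rel_get_of_lt hsort (by simpa using h)
    calc k + 1 = ((L.take (k+1)).filter (fun y => decide (y ≤ m))).length := by
            rw [h1, List.length_take]; omega
      _ ≤ _ := List.Sublist.length_le (List.Sublist.filter _ (List.take_sublist _ _))
  have hcount_ge : q - k ≤ (L.filter (fun y => decide (m ≤ y))).length := by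
    have h1 : (L.drop k).filter (fun y => decide (m ≤ y)) = L.drop k := by
      apply List.filter_eq_self.2
      intro y hy
      obtain ⟨i, hi, rfl⟩ := List.getElem_of_mem hy
      rw [List.getElem_drop]
      simp only [decide_eq_true_eq, hm]
      rcases Nat.eq_zero_or_pos i with h | h
      · subst h; simp
      · have hib : k + i < L.length := by
          have := hi; simp [List.length_drop] at this; omega
        exact List.Pairwise.rel_get_of_lt hsort (a := ⟨k, by omega⟩) (b := ⟨k + i, hib⟩)
          (by simp [Fin.lt_def]; omega)
    calc q - k = ((L.drop k).filter (fun y => decide (m ≤ y))).length := by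
            rw [h1, List.length_drop, hlen]
      _ ≤ _ := List.Sublist.length_le (List.Sublist.filter _ (List.drop_sublist _ _))
  -- translate to Finset cardinalities
  have hcard : ∀ p : ℝ → Prop, ∀ inst : DecidablePred p,
      (Finset.univ.filter (fun i => p (x i))).card = (L.filter (fun y => decide (p y))).length := by
    intro p inst
    rw [← List.countP_eq_length_filter, hperm.countP_eq, List.ofFn_eq_map,
      List.countP_map]
    have h1 : (Finset.univ.filter (fun i => p (x i))).card
        = ((List.finRange q).filter (fun i => decide (p (x i)))).length := rfl
    rw [h1, ← List.countP_eq_length_filter]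
    rfl
  -- intersect with H
  have hScard : f + 1 ≤ (Finset.univ.filter (fun i => x i ≤ m)).card := by
    rw [hcard (fun y => y ≤ m) (fun _ => inferInstance)]; omega
  have hTcard : f + 1 ≤ (Finset.univ.filter (fun i => m ≤ x i)).card := by
    rw [hcard (fun y => m ≤ y) (fun _ => inferInstance)]; omega
  have hinter : ∀ S : Finset (Fin q), f + 1 ≤ S.card → (S ∩ H).Nonempty := by
    intro S hS
    rw [← Finset.card_pos]
    have h1 := Finset.card_inter_add_card_union S H
    have h2 : (S ∪ H).card ≤ q := by
      simpa using Finset.card_le_card (Finset.subset_univ (S ∪ H))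
    omega
  obtain ⟨a, ha⟩ := hinter _ hScard
  obtain ⟨b, hb⟩ := hinter _ hTcard
  rw [Finset.mem_inter, Finset.mem_filter] at ha hb
  have hax : x a ≤ m := ha.1.2
  have hbx : m ≤ x b := hb.1.2
  have h1 : |x b - x l| ≤ (H ×ˢ H).sup' (hne.product hne) (fun p => |x p.1 - x p.2|) :=
    Finset.le_sup' (f := fun p : Fin q × Fin q => |x p.1 - x p.2|) (b := (b, l)) (Finset.mem_product.2 ⟨hb.2, hl⟩)
  have h2 : |x a - x l| ≤ (H ×ˢ H).sup' (hne.product hne) (fun p => |x p.1 - x p.2|) :=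
    Finset.le_sup' (f := fun p : Fin q × Fin q => |x p.1 - x p.2|) (b := (a, l)) (Finset.mem_product.2 ⟨ha.2, hl⟩)
  rw [abs_le] at h1 h2 ⊢
  constructor <;> [nlinarith [h2.1, h2.2]; nlinarith [h1.1, h1.2]]
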